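/- Assume assumption F1 holds and n ≥ m/ε. Then for j = mg + s with 0 ≤ s < m, the V-norm mixing coefficient satisfies β^{(V)}_n(j) ≤ 2 δ^{−1} sup_{k≤n} π^{(n)}_k V · K^s γ^g, where δ, γ ∈ (0,1) are the constants from the Hairer–Mattingly contraction lemma (i.e., Δ_{V_δ}(Q_{u₁}⋯Q_{u_m}) ≤ γ whenever |u_i − u| ≤ ε, with V_δ = 1 − δ + δV). -/

import Mathlib

/- Statement 18: Under F1, if n ≥ m/ε, then for j = mg + s (0 ≤ s < m) the V-norm
mixing coefficient satisfies β^{(V)}_n(j) ≤ 2 δ⁻¹ sup_{k≤n} π^{(n)}_k V · K^s γ^g,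
where δ, γ ∈ (0,1) are the constants of the Hairer–Mattingly contraction lemma
(Δ_{V_δ}(Q_{u₁}⋯Q_{u_m}) ≤ γ whenever |u_i − u| ≤ ε, V_δ = 1 − δ + δV). -/

open MeasureTheory ProbabilityTheory Filter Set
open scoped ENNReal NNReal

noncomputable section

variable {E : Type*} [MeasurableSpace E]

/-- `V`-norm distance `‖μ − ν‖_V`. -/
noncomputable def vDist (V : E → ℝ) (μ ν : Measure E) : ℝ :=
  ⨆ f : {f : E → ℝ // Measurable f ∧ ∀ x, |f x| ≤ V x},
    |(∫ x, f.1 x ∂μ) - ∫ x, f.1 x ∂ν|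

/-- Composition `δ_x Q_{u₁}⋯Q_{u_m}` of kernels along a finite list of times. -/
noncomputable def seqStep (Q : ℝ → E → Measure E) : List ℝ → E → Measure E
  | [], x => Measure.dirac x
  | (u :: us), x => (Q u x).bind (seqStep Q us)

/-- `tvstep Q n i j x = δ_x Q_{(i+1)/n} ⋯ Q_{(i+j)/n}`. -/
noncomputable def tvstep (Q : ℝ → E → Measure E) (n : ℕ) : ℤ → ℕ → E → Measure E
  | _, 0, x => Measure.dirac x
  | i, (j+1), x => (Q (((i:ℝ)+1)/(n:ℝ)) x).bind (tvstep Q n (i+1) j)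

/-- The `V`-norm mixing coefficient
`β^{(V)}_n(j) = sup_{k≤n} E‖π^{(n)}_k − δ_{X_{n,k−j}} Q_{(k−j+1)/n}⋯Q_{k/n}‖_V`. -/
noncomputable def betaV (V : E → ℝ) (Q : ℝ → E → Measure E)
    (πn : ℕ → ℤ → Measure E) (n : ℕ) (j : ℕ) : ℝ :=
  ⨆ k : {k : ℤ // k ≤ (n:ℤ)},
    ∫ x, vDist V (tvstep Q n ((k:ℤ) - j) j x) (πn n k) ∂(πn n ((k:ℤ) - j))


section AuxHM
variable {E : Type*} [MeasurableSpace E]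

section SeqQ
variable {Q : ℝ → E → Measure E}

lemma seqStep_measurable (hQ : ∀ u, Measurable (Q u)) :
    ∀ l : List ℝ, Measurable (seqStep Q l)
  | [] => Measure.measurable_dirac
  | (u :: l) => (Measure.measurable_bind' (seqStep_measurable hQ l)).comp (hQ u)

lemma seqStep_prob (hQ : ∀ u, Measurable (Q u)) (hQp : ∀ u x, IsProbabilityMeasure (Q u x)) :
    ∀ (l : List ℝ) (x : E), IsProbabilityMeasure (seqStep Q l x)
  | [], x => by simpa [seqStep] using (by infer_instance : IsProbabilityMeasure (Measure.dirac x))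
  | (u :: l), x => by
    constructor
    rw [seqStep, Measure.bind_apply MeasurableSet.univ (seqStep_measurable hQ l).aemeasurable]
    have : ∀ y, seqStep Q l y Set.univ = 1 := fun y => (seqStep_prob hQ hQp l y).measure_univ
    simp only [this]
    simpa using (hQp u x).measure_univ

lemma seqStep_append (hQ : ∀ u, Measurable (Q u)) :
    ∀ (l₁ l₂ : List ℝ) (x : E),
      seqStep Q (l₁ ++ l₂) x = (seqStep Q l₁ x).bind (seqStep Q l₂)
  | [], l₂, x => by simp [seqStep, Measure.dirac_bind (seqStep_measurable hQ l₂)]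
  | (u :: l₁), l₂, x => by
    simp only [List.cons_append, seqStep]
    rw [Measure.bind_bind (seqStep_measurable hQ l₁).aemeasurable (seqStep_measurable hQ l₂).aemeasurable]
    congr 1
    funext y
    exact seqStep_append hQ l₁ l₂ y

lemma bind_seqStep_append (hQ : ∀ u, Measurable (Q u)) (l₁ l₂ : List ℝ) (μ : Measure E) :
    μ.bind (seqStep Q (l₁ ++ l₂)) = (μ.bind (seqStep Q l₁)).bind (seqStep Q l₂) := by
  rw [Measure.bind_bind (seqStep_measurable hQ l₁).aemeasurable (seqStep_measurable hQ l₂).aemeasurable]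
  congr 1
  funext y
  exact seqStep_append hQ l₁ l₂ y

lemma bind_seqStep_cons (hQ : ∀ u, Measurable (Q u)) (u : ℝ) (l : List ℝ) (μ : Measure E) :
    μ.bind (seqStep Q (u :: l)) = (μ.bind (Q u)).bind (seqStep Q l) := by
  rw [Measure.bind_bind (hQ u).aemeasurable (seqStep_measurable hQ l).aemeasurable]
  rfl


end SeqQ
lemma vDist_nonneg (W : E → ℝ) (μ ν : Measure E) : 0 ≤ vDist W μ ν :=
  Real.iSup_nonneg fun _ => abs_nonneg _

/-- integrability from domination by a weight with finite lintegral -/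
lemma integrable_of_le_weight {W f : E → ℝ} {μ : Measure E} (hWm : Measurable W)
    (hfm : AEStronglyMeasurable f μ) (hfW : ∀ x, |f x| ≤ W x)
    (hfin : (∫⁻ x, ENNReal.ofReal (W x) ∂μ) ≠ ∞) :
    Integrable f μ := by
  have hWnn : ∀ x, 0 ≤ W x := fun x => le_trans (abs_nonneg _) (hfW x)
  have hWint : Integrable W μ := by
    refine ⟨hWm.aestronglyMeasurable, ?_⟩
    rw [hasFiniteIntegral_iff_ofReal (Eventually.of_forall hWnn)]
    exact lt_top_iff_ne_top.2 hfin
  exact hWint.mono' hfm (Eventually.of_forall (fun x => by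
    simpa [Real.norm_eq_abs] using hfW x))

lemma abs_integral_le_weight {W f : E → ℝ} {μ : Measure E} (hWm : Measurable W)
    (hfm : Measurable f) (hfW : ∀ x, |f x| ≤ W x) {B : ℝ} (hB : 0 ≤ B)
    (hfin : (∫⁻ x, ENNReal.ofReal (W x) ∂μ) ≤ ENNReal.ofReal B) :
    |∫ x, f x ∂μ| ≤ B := by
  have hWnn : ∀ x, 0 ≤ W x := fun x => le_trans (abs_nonneg _) (hfW x)
  have hfin' : (∫⁻ x, ENNReal.ofReal (W x) ∂μ) ≠ ∞ :=
    ne_top_of_le_ne_top ENNReal.ofReal_ne_top hfin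
  have hfi : Integrable f μ := integrable_of_le_weight hWm hfm.aestronglyMeasurable hfW hfin'
  have hWint : Integrable W μ := by
    refine ⟨hWm.aestronglyMeasurable, ?_⟩
    rw [hasFiniteIntegral_iff_ofReal (Eventually.of_forall hWnn)]
    exact lt_top_iff_ne_top.2 hfin'
  calc |∫ x, f x ∂μ| ≤ ∫ x, |f x| ∂μ := by
        simpa [Real.norm_eq_abs] using norm_integral_le_integral_norm (μ := μ) f
    _ ≤ ∫ x, W x ∂μ := integral_mono hfi.abs hWint (fun x => hfW x)
    _ ≤ B := by
        rw [integral_eq_lintegral_of_nonneg_ae (Eventually.of_forall hWnn)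
          hWm.aestronglyMeasurable]
        calc (∫⁻ x, ENNReal.ofReal (W x) ∂μ).toReal
            ≤ (ENNReal.ofReal B).toReal := ENNReal.toReal_mono ENNReal.ofReal_ne_top hfin
          _ = B := ENNReal.toReal_ofReal hB

lemma vDist_nonempty {W : E → ℝ} (hW : ∀ x, 0 ≤ W x) :
    Nonempty {f : E → ℝ // Measurable f ∧ ∀ x, |f x| ≤ W x} :=
  ⟨⟨0, measurable_const, fun x => by simpa using hW x⟩⟩

lemma vDist_le {W : E → ℝ} (hW : ∀ x, 0 ≤ W x) {μ ν : Measure E} {B : ℝ}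
    (h : ∀ f : E → ℝ, Measurable f → (∀ x, |f x| ≤ W x) →
      |(∫ x, f x ∂μ) - ∫ x, f x ∂ν| ≤ B) : vDist W μ ν ≤ B := by
  have := vDist_nonempty hW
  exact ciSup_le fun f => h f.1 f.2.1 f.2.2

lemma vDist_bddAbove {W : E → ℝ} (hWm : Measurable W) (hWnn : ∀ x, 0 ≤ W x)
    {μ ν : Measure E} (h₁ : (∫⁻ x, ENNReal.ofReal (W x) ∂μ) ≠ ∞)
    (h₂ : (∫⁻ x, ENNReal.ofReal (W x) ∂ν) ≠ ∞) :
    BddAbove (Set.range fun f : {f : E → ℝ // Measurable f ∧ ∀ x, |f x| ≤ W x} =>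
      |(∫ x, f.1 x ∂μ) - ∫ x, f.1 x ∂ν|) := by
  refine ⟨(∫⁻ x, ENNReal.ofReal (W x) ∂μ).toReal + (∫⁻ x, ENNReal.ofReal (W x) ∂ν).toReal, ?_⟩
  rintro r ⟨f, rfl⟩
  have b₁ : |∫ x, f.1 x ∂μ| ≤ (∫⁻ x, ENNReal.ofReal (W x) ∂μ).toReal :=
    abs_integral_le_weight hWm f.2.1 f.2.2 ENNReal.toReal_nonneg
      (by rw [ENNReal.ofReal_toReal h₁])
  have b₂ : |∫ x, f.1 x ∂ν| ≤ (∫⁻ x, ENNReal.ofReal (W x) ∂ν).toReal :=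
    abs_integral_le_weight hWm f.2.1 f.2.2 ENNReal.toReal_nonneg
      (by rw [ENNReal.ofReal_toReal h₂])
  calc |(∫ x, f.1 x ∂μ) - ∫ x, f.1 x ∂ν| ≤ |∫ x, f.1 x ∂μ| + |∫ x, f.1 x ∂ν| := abs_sub _ _
    _ ≤ _ := add_le_add b₁ b₂

lemma le_vDist {W : E → ℝ} (hWm : Measurable W) (hWnn : ∀ x, 0 ≤ W x)
    {μ ν : Measure E} (h₁ : (∫⁻ x, ENNReal.ofReal (W x) ∂μ) ≠ ∞)
    (h₂ : (∫⁻ x, ENNReal.ofReal (W x) ∂ν) ≠ ∞)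
    (f : E → ℝ) (hfm : Measurable f) (hfW : ∀ x, |f x| ≤ W x) :
    |(∫ x, f x ∂μ) - ∫ x, f x ∂ν| ≤ vDist W μ ν :=
  le_ciSup (vDist_bddAbove hWm hWnn h₁ h₂) (⟨f, hfm, hfW⟩ :
    {f : E → ℝ // Measurable f ∧ ∀ x, |f x| ≤ W x})

lemma vDist_le_bound {W : E → ℝ} (hWm : Measurable W) (hWnn : ∀ x, 0 ≤ W x)
    {μ ν : Measure E} {B₁ B₂ : ℝ} (hB₁ : 0 ≤ B₁) (hB₂ : 0 ≤ B₂)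
    (h₁ : (∫⁻ x, ENNReal.ofReal (W x) ∂μ) ≤ ENNReal.ofReal B₁)
    (h₂ : (∫⁻ x, ENNReal.ofReal (W x) ∂ν) ≤ ENNReal.ofReal B₂) :
    vDist W μ ν ≤ B₁ + B₂ := by
  refine vDist_le hWnn fun f hfm hfW => ?_
  calc |(∫ x, f x ∂μ) - ∫ x, f x ∂ν| ≤ |∫ x, f x ∂μ| + |∫ x, f x ∂ν| := abs_sub _ _
    _ ≤ B₁ + B₂ := add_le_add (abs_integral_le_weight hWm hfm hfW hB₁ h₁)
        (abs_integral_le_weight hWm hfm hfW hB₂ h₂)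

/-- weight comparison -/
lemma vDist_le_mul_vDist {W₁ W₂ : E → ℝ} (hW₂m : Measurable W₂)
    (hW₁nn : ∀ x, 0 ≤ W₁ x) (hW₂nn : ∀ x, 0 ≤ W₂ x) {c : ℝ} (hc : 0 < c)
    (hcomp : ∀ x, W₁ x ≤ c * W₂ x) {μ ν : Measure E}
    (h₁ : (∫⁻ x, ENNReal.ofReal (W₂ x) ∂μ) ≠ ∞)
    (h₂ : (∫⁻ x, ENNReal.ofReal (W₂ x) ∂ν) ≠ ∞) :
    vDist W₁ μ ν ≤ c * vDist W₂ μ ν := by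
  refine vDist_le hW₁nn fun f hfm hfW => ?_
  have hadm : ∀ x, |c⁻¹ * f x| ≤ W₂ x := fun x => by
    rw [abs_mul, abs_of_nonneg (inv_nonneg.2 hc.le)]
    rw [inv_mul_le_iff₀ hc]
    exact le_trans (hfW x) (le_trans (hcomp x) (le_of_eq rfl))
  have key := le_vDist hW₂m hW₂nn h₁ h₂ (fun x => c⁻¹ * f x) (measurable_const.mul hfm) hadm
  have : (∫ x, c⁻¹ * f x ∂μ) - ∫ x, c⁻¹ * f x ∂ν = c⁻¹ * ((∫ x, f x ∂μ) - ∫ x, f x ∂ν) := by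
    rw [integral_const_mul, integral_const_mul]; ring
  rw [this, abs_mul, abs_of_nonneg (inv_nonneg.2 hc.le)] at key
  calc |(∫ x, f x ∂μ) - ∫ x, f x ∂ν| = c * (c⁻¹ * |(∫ x, f x ∂μ) - ∫ x, f x ∂ν|) := by
        field_simp
    _ ≤ c * vDist W₂ μ ν := by
        exact mul_le_mul_of_nonneg_left key hc.le


section Kern
variable {κ : E → Measure E}

lemma measurable_bind_integral (hκ : Measurable κ) (hκp : ∀ x, IsProbabilityMeasure (κ x))
    {f : E → ℝ} (hfm : Measurable f) :
    StronglyMeasurable fun x => ∫ y, f y ∂κ x := by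
  let k : ProbabilityTheory.Kernel E E := ⟨κ, hκ⟩
  have : IsMarkovKernel k := ⟨fun a => hκp a⟩
  have h : StronglyMeasurable (Function.uncurry fun (_ : E) (y : E) => f y) :=
    (hfm.comp measurable_snd).stronglyMeasurable
  exact MeasureTheory.StronglyMeasurable.integral_kernel_prod_right (κ := k) h

lemma integral_bind' (hκ : Measurable κ) (hκp : ∀ x, IsProbabilityMeasure (κ x))
    {W : E → ℝ} (hWm : Measurable W) {f : E → ℝ} (hfm : Measurable f)
    (hfW : ∀ x, |f x| ≤ W x)
    (hfin : ∀ x, (∫⁻ y, ENNReal.ofReal (W y) ∂κ x) ≠ ∞) (μ : Measure E)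
    (hμfin : (∫⁻ y, ENNReal.ofReal (W y) ∂(μ.bind κ)) ≠ ∞) :
    ∫ y, f y ∂(μ.bind κ) = ∫ x, ∫ y, f y ∂κ x ∂μ := by
  have hWnn : ∀ x, 0 ≤ W x := fun x => le_trans (abs_nonneg _) (hfW x)
  have hWm' : Measurable fun y => ENNReal.ofReal (W y) := hWm.ennreal_ofReal
  have hbindW : (∫⁻ y, ENNReal.ofReal (W y) ∂(μ.bind κ))
      = ∫⁻ x, ∫⁻ y, ENNReal.ofReal (W y) ∂κ x ∂μ := Measure.lintegral_bind hκ.aemeasurable hWm'.aemeasurable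
  -- components
  set h₁ : E → ℝ≥0∞ := fun x => ∫⁻ y, ENNReal.ofReal (f y) ∂κ x with hh₁
  set h₂ : E → ℝ≥0∞ := fun x => ∫⁻ y, ENNReal.ofReal (-(f y)) ∂κ x with hh₂
  have hm₁ : Measurable h₁ := (Measure.measurable_lintegral hfm.ennreal_ofReal).comp hκ
  have hm₂ : Measurable h₂ := (Measure.measurable_lintegral hfm.neg.ennreal_ofReal).comp hκ
  have hle₁ : ∀ x, h₁ x ≤ ∫⁻ y, ENNReal.ofReal (W y) ∂κ x := fun x =>
    lintegral_mono fun y => ENNReal.ofReal_le_ofReal (le_trans (le_abs_self _) (hfW y))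
  have hle₂ : ∀ x, h₂ x ≤ ∫⁻ y, ENNReal.ofReal (W y) ∂κ x := fun x =>
    lintegral_mono fun y => ENNReal.ofReal_le_ofReal (le_trans (neg_le_abs _) (hfW y))
  have hfin₁ : (∫⁻ x, h₁ x ∂μ) ≠ ∞ := by
    refine ne_top_of_le_ne_top (by rw [hbindW] at hμfin; exact hμfin) ?_
    exact lintegral_mono fun x => hle₁ x
  have hfin₂ : (∫⁻ x, h₂ x ∂μ) ≠ ∞ := by
    refine ne_top_of_le_ne_top (by rw [hbindW] at hμfin; exact hμfin) ?_
    exact lintegral_mono fun x => hle₂ x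
  have hae₁ : ∀ x, h₁ x < ∞ := fun x => lt_of_le_of_lt (hle₁ x) (lt_top_iff_ne_top.2 (hfin x))
  have hae₂ : ∀ x, h₂ x < ∞ := fun x => lt_of_le_of_lt (hle₂ x) (lt_top_iff_ne_top.2 (hfin x))
  -- LHS decomposition
  have hfi_bind : Integrable f (μ.bind κ) :=
    integrable_of_le_weight hWm hfm.aestronglyMeasurable hfW hμfin
  have hLHS := integral_eq_lintegral_pos_part_sub_lintegral_neg_part hfi_bind
  rw [hLHS]
  rw [Measure.lintegral_bind hκ.aemeasurable hfm.ennreal_ofReal.aemeasurable, Measure.lintegral_bind (f := fun x => ENNReal.ofReal (-f x)) hκ.aemeasurable hfm.neg.ennreal_ofReal.aemeasurable]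
  -- RHS decomposition
  have hinner : ∀ x, (∫ y, f y ∂κ x) = (h₁ x).toReal - (h₂ x).toReal := fun x => by
    exact integral_eq_lintegral_pos_part_sub_lintegral_neg_part
      (integrable_of_le_weight hWm hfm.aestronglyMeasurable hfW (hfin x))
  have hint₁ : Integrable (fun x => (h₁ x).toReal) μ :=
    integrable_toReal_of_lintegral_ne_top hm₁.aemeasurable hfin₁
  have hint₂ : Integrable (fun x => (h₂ x).toReal) μ :=
    integrable_toReal_of_lintegral_ne_top hm₂.aemeasurable hfin₂
  have : (∫ x, ∫ y, f y ∂κ x ∂μ)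
      = (∫ x, (h₁ x).toReal ∂μ) - ∫ x, (h₂ x).toReal ∂μ := by
    rw [← integral_sub hint₁ hint₂]
    exact integral_congr_ae (Eventually.of_forall fun x => hinner x)
  rw [this,
    integral_toReal hm₁.aemeasurable (Eventually.of_forall hae₁),
    integral_toReal hm₂.aemeasurable (Eventually.of_forall hae₂)]

lemma lintegral_weight_bind_le (hκ : Measurable κ) {W : E → ℝ} (hWm : Measurable W)
    {C : ℝ} (hC : 0 ≤ C)
    (hdrift : ∀ x, (∫⁻ y, ENNReal.ofReal (W y) ∂κ x) ≤ ENNReal.ofReal (C * W x))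
    (hWnn : ∀ x, 0 ≤ W x) (μ : Measure E) :
    (∫⁻ y, ENNReal.ofReal (W y) ∂(μ.bind κ)) ≤ ENNReal.ofReal C * ∫⁻ x, ENNReal.ofReal (W x) ∂μ := by
  rw [Measure.lintegral_bind hκ.aemeasurable hWm.ennreal_ofReal.aemeasurable]
  calc (∫⁻ x, ∫⁻ y, ENNReal.ofReal (W y) ∂κ x ∂μ)
      ≤ ∫⁻ x, ENNReal.ofReal (C * W x) ∂μ := lintegral_mono fun x => hdrift x
    _ = ∫⁻ x, ENNReal.ofReal C * ENNReal.ofReal (W x) ∂μ := by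
        congr 1; funext x; rw [ENNReal.ofReal_mul hC]
    _ = ENNReal.ofReal C * ∫⁻ x, ENNReal.ofReal (W x) ∂μ :=
        lintegral_const_mul _ hWm.ennreal_ofReal

/-- single-step expansion bound: `Δ_W(κ) ≤ K'` from `κ W ≤ K' W`. -/
lemma vDist_bind_le (hκ : Measurable κ) (hκp : ∀ x, IsProbabilityMeasure (κ x))
    {W : E → ℝ} (hWm : Measurable W) (hWnn : ∀ x, 0 ≤ W x) {K' : ℝ} (hK' : 0 < K')
    (hdrift : ∀ x, (∫⁻ y, ENNReal.ofReal (W y) ∂κ x) ≤ ENNReal.ofReal (K' * W x))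
    (μ₁ μ₂ : Measure E)
    (h₁ : (∫⁻ x, ENNReal.ofReal (W x) ∂μ₁) ≠ ∞) (h₂ : (∫⁻ x, ENNReal.ofReal (W x) ∂μ₂) ≠ ∞) :
    vDist W (μ₁.bind κ) (μ₂.bind κ) ≤ K' * vDist W μ₁ μ₂ := by
  refine vDist_le hWnn fun f hfm hfW => ?_
  have hfin : ∀ x, (∫⁻ y, ENNReal.ofReal (W y) ∂κ x) ≠ ∞ := fun x =>
    ne_top_of_le_ne_top ENNReal.ofReal_ne_top (hdrift x)
  have hb₁ : (∫⁻ y, ENNReal.ofReal (W y) ∂(μ₁.bind κ)) ≠ ∞ :=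
    ne_top_of_le_ne_top (ENNReal.mul_ne_top ENNReal.ofReal_ne_top h₁)
      (lintegral_weight_bind_le hκ hWm hK'.le hdrift hWnn μ₁)
  have hb₂ : (∫⁻ y, ENNReal.ofReal (W y) ∂(μ₂.bind κ)) ≠ ∞ :=
    ne_top_of_le_ne_top (ENNReal.mul_ne_top ENNReal.ofReal_ne_top h₂)
      (lintegral_weight_bind_le hκ hWm hK'.le hdrift hWnn μ₂)
  rw [integral_bind' hκ hκp hWm hfm hfW hfin μ₁ hb₁,
      integral_bind' hκ hκp hWm hfm hfW hfin μ₂ hb₂]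
  set F : E → ℝ := fun x => ∫ y, f y ∂κ x with hF
  have hFm : Measurable F := (measurable_bind_integral hκ hκp hfm).measurable
  have hFb : ∀ x, |F x| ≤ K' * W x := fun x =>
    abs_integral_le_weight hWm hfm hfW (mul_nonneg hK'.le (hWnn x)) (hdrift x)
  have hadm : ∀ x, |K'⁻¹ * F x| ≤ W x := fun x => by
    rw [abs_mul, abs_of_nonneg (inv_nonneg.2 hK'.le)]
    rw [inv_mul_le_iff₀ hK']
    exact hFb x
  have key := le_vDist hWm hWnn h₁ h₂ (fun x => K'⁻¹ * F x) (measurable_const.mul hFm) hadm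
  have heq : (∫ x, K'⁻¹ * F x ∂μ₁) - ∫ x, K'⁻¹ * F x ∂μ₂
      = K'⁻¹ * ((∫ x, F x ∂μ₁) - ∫ x, F x ∂μ₂) := by
    rw [integral_const_mul, integral_const_mul]; ring
  rw [heq, abs_mul, abs_of_nonneg (inv_nonneg.2 hK'.le)] at key
  calc |(∫ x, F x ∂μ₁) - ∫ x, F x ∂μ₂|
      = K' * (K'⁻¹ * |(∫ x, F x ∂μ₁) - ∫ x, F x ∂μ₂|) := by field_simp
    _ ≤ K' * vDist W μ₁ μ₂ := mul_le_mul_of_nonneg_left key hK'.le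

set_option maxHeartbeats 1000000 in
/-- Jordan decomposition argument: pointwise oscillation bound implies contraction. -/
lemma vDist_bind_contract (hκ : Measurable κ) (hκp : ∀ x, IsProbabilityMeasure (κ x))
    {W : E → ℝ} (hWm : Measurable W) (hWnn : ∀ x, 0 ≤ W x)
    {γ C : ℝ} (hγ : 0 ≤ γ) (hC : 1 ≤ C)
    (hdrift : ∀ x, (∫⁻ y, ENNReal.ofReal (W y) ∂κ x) ≤ ENNReal.ofReal (C * W x))
    (hosc : ∀ f : E → ℝ, Measurable f → (∀ x, |f x| ≤ W x) →
      ∀ x y, |(∫ z, f z ∂κ x) - ∫ z, f z ∂κ y| ≤ γ * (W x + W y))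
    (μ₁ μ₂ : Measure E) (hp₁ : IsProbabilityMeasure μ₁) (hp₂ : IsProbabilityMeasure μ₂)
    (h₁ : (∫⁻ x, ENNReal.ofReal (W x) ∂μ₁) ≠ ∞) (h₂ : (∫⁻ x, ENNReal.ofReal (W x) ∂μ₂) ≠ ∞) :
    vDist W (μ₁.bind κ) (μ₂.bind κ) ≤ γ * vDist W μ₁ μ₂ := by
  classical
  have hle1CW : ∀ x, W x ≤ C * W x := fun x => by
    nlinarith [mul_le_mul_of_nonneg_right hC (hWnn x)]
  have hC0 : (0:ℝ) < C := lt_of_lt_of_le one_pos hC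
  have hfin : ∀ x, (∫⁻ y, ENNReal.ofReal (W y) ∂κ x) ≠ ∞ := fun x =>
    ne_top_of_le_ne_top ENNReal.ofReal_ne_top (hdrift x)
  have hb₁ : (∫⁻ y, ENNReal.ofReal (W y) ∂(μ₁.bind κ)) ≠ ∞ :=
    ne_top_of_le_ne_top (ENNReal.mul_ne_top ENNReal.ofReal_ne_top h₁)
      (lintegral_weight_bind_le hκ hWm hC0.le hdrift hWnn μ₁)
  have hb₂ : (∫⁻ y, ENNReal.ofReal (W y) ∂(μ₂.bind κ)) ≠ ∞ :=
    ne_top_of_le_ne_top (ENNReal.mul_ne_top ENNReal.ofReal_ne_top h₂)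
      (lintegral_weight_bind_le hκ hWm hC0.le hdrift hWnn μ₂)
  -- Jordan decomposition of μ₁ - μ₂
  set s : SignedMeasure E := μ₁.toSignedMeasure - μ₂.toSignedMeasure with hs
  set j := s.toJordanDecomposition with hj
  set p := j.posPart with hpdef
  set q := j.negPart with hqdef
  haveI hpfin : IsFiniteMeasure p := j.posPart_finite
  haveI hqfin : IsFiniteMeasure q := j.negPart_finite
  have hsm : p.toSignedMeasure - q.toSignedMeasure = s := by
    have h0 := s.toSignedMeasure_toJordanDecomposition
    rwa [MeasureTheory.JordanDecomposition.toSignedMeasure] at h0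
  have key : μ₂ + p = μ₁ + q := by
    rw [← MeasureTheory.Measure.toSignedMeasure_eq_toSignedMeasure_iff,
      Measure.toSignedMeasure_add, Measure.toSignedMeasure_add]
    have h' : p.toSignedMeasure - q.toSignedMeasure
        = μ₁.toSignedMeasure - μ₂.toSignedMeasure := by rw [hsm]
    rw [sub_eq_sub_iff_add_eq_add] at h'
    rw [add_comm]
    exact h'
  obtain ⟨A, hA, hpA, hqA⟩ := j.mutuallySingular
  have hq_le : q ≤ μ₂ := by
    refine Measure.le_iff.2 fun B hB => ?_
    have hqBA : q (B \ A) = 0 := measure_mono_null (fun x hx => hx.2) hqA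
    have h1 : q B = q (B ∩ A) := by
      have h2 := measure_inter_add_diff (μ := q) B hA
      rw [hqBA, add_zero] at h2; exact h2.symm
    have hpBA : p (B ∩ A) = 0 := measure_mono_null Set.inter_subset_right hpA
    have h3 : q (B ∩ A) ≤ (μ₁ + q) (B ∩ A) := by
      rw [Measure.add_apply]; exact le_add_self
    rw [← key, Measure.add_apply, hpBA, add_zero] at h3
    calc q B = q (B ∩ A) := h1
      _ ≤ μ₂ (B ∩ A) := h3
      _ ≤ μ₂ B := measure_mono Set.inter_subset_left
  have hp_le : p ≤ μ₁ := by
    refine Measure.le_iff.2 fun B hB => ?_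
    have hpBA : p (B ∩ A) = 0 := measure_mono_null Set.inter_subset_right hpA
    have h1 : p B = p (B \ A) := by
      have h2 := measure_inter_add_diff (μ := p) B hA
      rw [hpBA, zero_add] at h2; exact h2.symm
    have hqBA : q (B \ A) = 0 := measure_mono_null (fun x hx => hx.2) hqA
    have h3 : p (B \ A) ≤ (μ₂ + p) (B \ A) := by
      rw [Measure.add_apply]; exact le_add_self
    rw [key, Measure.add_apply, hqBA, add_zero] at h3
    calc p B = p (B \ A) := h1
      _ ≤ μ₁ (B \ A) := h3
      _ ≤ μ₁ B := measure_mono Set.diff_subset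
  have hfinp : (∫⁻ x, ENNReal.ofReal (W x) ∂p) ≠ ∞ :=
    ne_top_of_le_ne_top h₁ (lintegral_mono' hp_le le_rfl)
  have hfinq : (∫⁻ x, ENNReal.ofReal (W x) ∂q) ≠ ∞ :=
    ne_top_of_le_ne_top h₂ (lintegral_mono' hq_le le_rfl)
  have hmass : p Set.univ = q Set.univ := by
    have h0 : (μ₂ + p) Set.univ = (μ₁ + q) Set.univ := by rw [key]
    rw [Measure.add_apply, Measure.add_apply, hp₂.measure_univ, hp₁.measure_univ] at h0
    exact (ENNReal.add_right_inj (by simp)).1 h0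
  -- integrability helper
  have hWC : ∀ (ρ : Measure E), (∫⁻ x, ENNReal.ofReal (W x) ∂ρ) ≠ ∞ →
      ∀ (g : E → ℝ), Measurable g → (∀ x, |g x| ≤ C * W x) → Integrable g ρ := by
    intro ρ hρ g hgm hgb
    refine integrable_of_le_weight (f := g) (W := fun x => C * W x)
      (hWm.const_mul C) hgm.aestronglyMeasurable hgb ?_
    have : (∫⁻ x, ENNReal.ofReal (C * W x) ∂ρ)
        = ENNReal.ofReal C * ∫⁻ x, ENNReal.ofReal (W x) ∂ρ := by
      rw [← lintegral_const_mul _ hWm.ennreal_ofReal]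
      congr 1; funext x; rw [ENNReal.ofReal_mul hC0.le]
    rw [this]
    exact ENNReal.mul_ne_top ENNReal.ofReal_ne_top hρ
  -- key rearrangement for integrals
  have keyint : ∀ (g : E → ℝ), Measurable g → (∀ x, |g x| ≤ C * W x) →
      (∫ x, g x ∂μ₁) - ∫ x, g x ∂μ₂ = (∫ x, g x ∂p) - ∫ x, g x ∂q := by
    intro g hgm hgb
    have e1 : ∫ x, g x ∂(μ₂ + p) = ∫ x, g x ∂(μ₁ + q) := by rw [key]
    rw [integral_add_measure (hWC μ₂ h₂ g hgm hgb) (hWC p hfinp g hgm hgb),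
      integral_add_measure (hWC μ₁ h₁ g hgm hgb) (hWC q hfinq g hgm hgb)] at e1
    linarith
  -- main part
  refine vDist_le hWnn fun f hfm hfW => ?_
  rw [integral_bind' hκ hκp hWm hfm hfW hfin μ₁ hb₁,
      integral_bind' hκ hκp hWm hfm hfW hfin μ₂ hb₂]
  set F : E → ℝ := fun x => ∫ y, f y ∂κ x with hF
  have hFm : Measurable F := (measurable_bind_integral hκ hκp hfm).measurable
  have hFb : ∀ x, |F x| ≤ C * W x := fun x =>
    abs_integral_le_weight hWm hfm hfW (mul_nonneg hC0.le (hWnn x)) (hdrift x)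
  rw [keyint F hFm hFb]
  by_cases hc0 : p Set.univ = 0
  · have hp0 : p = 0 := Measure.measure_univ_eq_zero.1 hc0
    have hq0 : q = 0 := Measure.measure_univ_eq_zero.1 (hmass ▸ hc0)
    rw [hp0, hq0]
    simp only [integral_zero_measure, sub_zero, sub_self, abs_zero]
    exact mul_nonneg hγ (vDist_nonneg W μ₁ μ₂)
  · set c : ℝ := (p Set.univ).toReal with hcdef
    have hc : 0 < c := ENNReal.toReal_pos hc0 (measure_ne_top p _)
    have hqc : (q Set.univ).toReal = c := by rw [hcdef, hmass]
    set a : ℝ := ∫ x, F x ∂p with ha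
    set d : ℝ := ∫ x, F x ∂q with hd
    set wp : ℝ := ∫ x, W x ∂p with hwp
    set wq : ℝ := ∫ x, W x ∂q with hwq
    have hWp : Integrable W p := hWC p hfinp W hWm (fun x => by
      rw [abs_of_nonneg (hWnn x)]; exact hle1CW x)
    have hWq : Integrable W q := hWC q hfinq W hWm (fun x => by
      rw [abs_of_nonneg (hWnn x)]; exact hle1CW x)
    have hFp : Integrable F p := hWC p hfinp F hFm hFb
    have hFq : Integrable F q := hWC q hfinq F hFm hFb
    have hwpnn : 0 ≤ wp := integral_nonneg hWnn
    have hwqnn : 0 ≤ wq := integral_nonneg hWnn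
    -- step 2 : |a - d| ≤ γ * (wp + wq)
    have step2 : |a - d| ≤ γ * (wp + wq) := by
      set G : E → ℝ := fun x => c * F x - d with hG
      have hGm : Measurable G := (hFm.const_mul c).sub measurable_const
      have hGrep : ∀ x, G x = ∫ y, (F x - F y) ∂q := by
        intro x
        rw [integral_sub (integrable_const (F x)) hFq, integral_const, measureReal_def, hqc]
        simp [hG, hd, smul_eq_mul]
      have hGbound : ∀ x, |G x| ≤ γ * (c * W x + wq) := by
        intro x
        rw [hGrep x]
        have habs : |∫ y, (F x - F y) ∂q| ≤ ∫ y, |F x - F y| ∂q := by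
          simpa [Real.norm_eq_abs] using
            norm_integral_le_integral_norm (μ := q) (fun y => F x - F y)
        have hsub : Integrable (fun y => F x - F y) q := (integrable_const (F x)).sub hFq
        have hmono : ∫ y, |F x - F y| ∂q ≤ ∫ y, γ * (W x + W y) ∂q :=
          integral_mono hsub.abs (((integrable_const (W x)).add hWq).const_mul γ)
            fun y => hosc f hfm hfW x y
        have hcomp : ∫ y, γ * (W x + W y) ∂q = γ * (c * W x + wq) := by
          have e : (fun y => γ * (W x + W y)) = fun y => γ * W x + γ * W y := by
            funext y; ring
          rw [e, integral_add (integrable_const _) (hWq.const_mul γ),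
            integral_const, integral_const_mul]
          rw [measureReal_def, hqc]
          simp only [smul_eq_mul]; ring
        calc |∫ y, (F x - F y) ∂q| ≤ ∫ y, |F x - F y| ∂q := habs
          _ ≤ ∫ y, γ * (W x + W y) ∂q := hmono
          _ = γ * (c * W x + wq) := hcomp
      have hGint : Integrable G p := (hFp.const_mul c).sub (integrable_const d)
      have hGp : ∫ x, G x ∂p = c * a - d * c := by
        rw [integral_sub (hFp.const_mul c) (integrable_const d), integral_const_mul,
          integral_const, measureReal_def, ← hcdef]
        simp only [smul_eq_mul]; ring
      have hGabs : |∫ x, G x ∂p| ≤ ∫ x, |G x| ∂p := by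
        simpa [Real.norm_eq_abs] using norm_integral_le_integral_norm (μ := p) G
      have hGmono : ∫ x, |G x| ∂p ≤ ∫ x, γ * (c * W x + wq) ∂p :=
        integral_mono hGint.abs (((hWp.const_mul c).add (integrable_const wq)).const_mul γ)
          fun x => hGbound x
      have hGcomp : ∫ x, γ * (c * W x + wq) ∂p = γ * (c * wp + wq * c) := by
        have e : (fun x => γ * (c * W x + wq)) = fun x => (γ * c) * W x + γ * wq := by
          funext x; ring
        rw [e, integral_add ((hWp.const_mul c).const_mul γ |>.congr
          (Eventually.of_forall fun x => by simp only []; ring)) (integrable_const _),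
          integral_const_mul, integral_const, measureReal_def, ← hcdef]
        simp only [smul_eq_mul]; ring
      have hfinal : |c * a - d * c| ≤ γ * (c * wp + wq * c) := by
        calc |c * a - d * c| = |∫ x, G x ∂p| := by rw [hGp]
          _ ≤ ∫ x, |G x| ∂p := hGabs
          _ ≤ ∫ x, γ * (c * W x + wq) ∂p := hGmono
          _ = γ * (c * wp + wq * c) := hGcomp
      have h5 : c * |a - d| ≤ c * (γ * (wp + wq)) := by
        have e : c * |a - d| = |c * a - d * c| := by
          have e2 : c * a - d * c = c * (a - d) := by ring
          rw [e2, abs_mul, abs_of_pos hc]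
        rw [e]
        calc |c * a - d * c| ≤ γ * (c * wp + wq * c) := hfinal
          _ = c * (γ * (wp + wq)) := by ring
      exact le_of_mul_le_mul_left h5 hc
    -- step 3 : wp + wq ≤ vDist W μ₁ μ₂
    have step3 : wp + wq ≤ vDist W μ₁ μ₂ := by
      set f₀ : E → ℝ := fun x => if x ∈ A then -W x else W x with hf₀
      have hf₀m : Measurable f₀ := Measurable.ite hA hWm.neg hWm
      have hf₀b : ∀ x, |f₀ x| ≤ W x := fun x => by
        by_cases hx : x ∈ A <;> simp [hf₀, hx, abs_neg, abs_of_nonneg (hWnn x)]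
      have hf₀p : f₀ =ᵐ[p] W := by
        refine measure_mono_null (fun x hx => ?_) hpA
        by_contra hxA
        exact hx (by simp [hf₀, hxA])
      have hf₀q : f₀ =ᵐ[q] fun x => -W x := by
        refine measure_mono_null (fun x hx => ?_) hqA
        by_contra hxA
        simp only [Set.mem_compl_iff, not_not] at hxA
        exact hx (by simp [hf₀, hxA])
      have e1 : ∫ x, f₀ x ∂p = wp := by
        rw [integral_congr_ae hf₀p]
      have e2 : ∫ x, f₀ x ∂q = -wq := by
        rw [integral_congr_ae hf₀q, integral_neg]
      have e3 := keyint f₀ hf₀m (fun x => le_trans (hf₀b x) (hle1CW x))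
      rw [e1, e2, sub_neg_eq_add] at e3
      have e4 := le_vDist hWm hWnn h₁ h₂ f₀ hf₀m hf₀b
      calc wp + wq = (∫ x, f₀ x ∂μ₁) - ∫ x, f₀ x ∂μ₂ := e3.symm
        _ ≤ |(∫ x, f₀ x ∂μ₁) - ∫ x, f₀ x ∂μ₂| := le_abs_self _
        _ ≤ vDist W μ₁ μ₂ := e4
    calc |a - d| ≤ γ * (wp + wq) := step2
      _ ≤ γ * vDist W μ₁ μ₂ := mul_le_mul_of_nonneg_left step3 hγ

end Kern
lemma lint_W {V : E → ℝ} (hVm : Measurable V) {δ : ℝ} (hδ0 : 0 ≤ δ) (hδ1 : δ ≤ 1)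
    (hVnn : ∀ z, 0 ≤ V z) (ρ : Measure E) :
    ∫⁻ z, ENNReal.ofReal (1 - δ + δ * V z) ∂ρ
      = ENNReal.ofReal (1 - δ) * ρ Set.univ + ENNReal.ofReal δ * ∫⁻ z, ENNReal.ofReal (V z) ∂ρ := by
  have e : ∀ z, ENNReal.ofReal (1 - δ + δ * V z)
      = ENNReal.ofReal (1 - δ) + ENNReal.ofReal δ * ENNReal.ofReal (V z) := by
    intro z
    rw [ENNReal.ofReal_add (by linarith) (mul_nonneg hδ0 (hVnn z)), ENNReal.ofReal_mul hδ0]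
  simp only [e]
  rw [lintegral_add_left measurable_const, lintegral_const_mul _ hVm.ennreal_ofReal,
    lintegral_const]

/-- The Hairer–Mattingly pointwise oscillation bound. -/
lemma osc_bound {V : E → ℝ} (hVm : Measurable V) (hV1 : ∀ x, 1 ≤ V x)
    {lam b ηp R : ℝ} (hlam0 : 0 < lam) (hlam1 : lam < 1) (hb : 0 < b)
    (hηp : 0 < ηp) (hηp1 : ηp ≤ 1) (hRpos : 0 < R)
    {ν : Measure E} (hν : IsProbabilityMeasure ν)
    {P : E → Measure E} (hPp : ∀ x, IsProbabilityMeasure (P x))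
    (hdrift : ∀ x, (∫⁻ y, ENNReal.ofReal (V y) ∂P x) ≤ ENNReal.ofReal (lam * V x + b))
    (hminor : ∀ x, V x ≤ R → ∀ s : Set E, ENNReal.ofReal ηp * ν s ≤ P x s)
    {δ γ : ℝ} (hδ0 : 0 < δ) (hδ1 : δ < 1) (hγ0 : 0 ≤ γ)
    (hA : ∀ S : ℝ, R ≤ S → 2*(1-δ) + δ*(lam*S+2*b) ≤ γ*(2*(1-δ)+δ*S))
    (hB : (1-δ)*(1-ηp) + δ*(lam*R+b) ≤ γ)
    (f : E → ℝ) (hfm : Measurable f) (hfW : ∀ x, |f x| ≤ 1 - δ + δ * V x) (x y : E) :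
    |(∫ z, f z ∂P x) - ∫ z, f z ∂P y| ≤ γ * ((1 - δ + δ * V x) + (1 - δ + δ * V y)) := by
  set W : E → ℝ := fun z => 1 - δ + δ * V z with hWdef
  have hVnn : ∀ z, 0 ≤ V z := fun z => le_trans zero_le_one (hV1 z)
  have hW1 : ∀ z, 1 ≤ W z := fun z => by
    simp only [hWdef]; nlinarith [mul_le_mul_of_nonneg_left (hV1 z) hδ0.le]
  have hWm : Measurable W := measurable_const.add (hVm.const_mul δ)
  have hWnn : ∀ z, 0 ≤ W z := fun z => le_trans zero_le_one (hW1 z)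
  have hWdrift : ∀ z, (∫⁻ w, ENNReal.ofReal (W w) ∂P z)
      ≤ ENNReal.ofReal ((1-δ) + δ * (lam * V z + b)) := by
    intro z
    rw [lint_W hVm hδ0.le hδ1.le hVnn]
    rw [(hPp z).measure_univ, mul_one]
    calc ENNReal.ofReal (1-δ) + ENNReal.ofReal δ * ∫⁻ w, ENNReal.ofReal (V w) ∂P z
        ≤ ENNReal.ofReal (1-δ) + ENNReal.ofReal δ * ENNReal.ofReal (lam * V z + b) :=
          add_le_add_right (mul_le_mul_right (hdrift z) _) _
      _ = ENNReal.ofReal ((1-δ) + δ * (lam * V z + b)) := by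
          rw [← ENNReal.ofReal_mul hδ0.le,
            ← ENNReal.ofReal_add (by linarith)
              (mul_nonneg hδ0.le (by nlinarith [mul_nonneg hlam0.le (hVnn z)]))]
  by_cases hcase : R ≤ V x + V y
  · have bx : |∫ z, f z ∂P x| ≤ (1-δ) + δ * (lam * V x + b) :=
      abs_integral_le_weight hWm hfm hfW (by nlinarith [mul_nonneg hlam0.le (hVnn x), mul_nonneg hδ0.le (by nlinarith [mul_nonneg hlam0.le (hVnn x)] : (0:ℝ) ≤ lam * V x + b)]) (hWdrift x)
    have by' : |∫ z, f z ∂P y| ≤ (1-δ) + δ * (lam * V y + b) :=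
      abs_integral_le_weight hWm hfm hfW (by nlinarith [mul_nonneg hlam0.le (hVnn y), mul_nonneg hδ0.le (by nlinarith [mul_nonneg hlam0.le (hVnn y)] : (0:ℝ) ≤ lam * V y + b)]) (hWdrift y)
    have hAS := hA (V x + V y) hcase
    calc |(∫ z, f z ∂P x) - ∫ z, f z ∂P y| ≤ |∫ z, f z ∂P x| + |∫ z, f z ∂P y| := abs_sub _ _
      _ ≤ ((1-δ) + δ * (lam * V x + b)) + ((1-δ) + δ * (lam * V y + b)) := add_le_add bx by'
      _ = 2*(1-δ) + δ*(lam*(V x + V y)+2*b) := by ring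
      _ ≤ γ*(2*(1-δ)+δ*(V x + V y)) := hAS
      _ = γ * (W x + W y) := by simp only [hWdef]; ring
  · push_neg at hcase
    have hVx : V x ≤ R := by nlinarith [hV1 y]
    have hVy : V y ≤ R := by nlinarith [hV1 x]
    set c : ℝ≥0∞ := ENNReal.ofReal ηp with hcdef
    haveI hsmf : IsFiniteMeasure (c • ν) := by
      constructor
      rw [Measure.smul_apply, hν.measure_univ, smul_eq_mul, mul_one]
      exact ENNReal.ofReal_lt_top
    have hint_bound : ∀ z : E, (∫⁻ w, ENNReal.ofReal (W w) ∂P z) ≠ ∞ := fun z =>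
      ne_top_of_le_ne_top ENNReal.ofReal_ne_top (hWdrift z)
    have hfint : ∀ z, Integrable f (P z) := fun z =>
      integrable_of_le_weight hWm hfm.aestronglyMeasurable hfW (hint_bound z)
    have hle : ∀ z, V z ≤ R → c • ν ≤ P z := by
      intro z hVz
      refine Measure.le_iff.2 fun s hs => ?_
      simpa [Measure.smul_apply, smul_eq_mul] using hminor z hVz s
    have hsub_bound : ∀ z : E, V z ≤ R →
        |∫ w, f w ∂(P z - c • ν)| ≤ (1-δ)*(1-ηp) + δ*(lam*R+b) := by
      intro z hVz
      refine abs_integral_le_weight hWm hfm hfW (by nlinarith [mul_nonneg hlam0.le hRpos.le, mul_nonneg (by linarith : (0:ℝ) ≤ 1-δ) (by linarith : (0:ℝ) ≤ 1-ηp), mul_nonneg hδ0.le (by nlinarith [mul_nonneg hlam0.le hRpos.le] : (0:ℝ) ≤ lam * R + b)]) ?_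
      rw [lint_W hVm hδ0.le hδ1.le hVnn]
      have huniv : (P z - c • ν) Set.univ = ENNReal.ofReal (1 - ηp) := by
        rw [Measure.sub_apply MeasurableSet.univ (hle z hVz), (hPp z).measure_univ,
          Measure.smul_apply, hν.measure_univ, smul_eq_mul, mul_one, hcdef,
          ENNReal.ofReal_sub 1 hηp.le, ENNReal.ofReal_one]
      have hVsub : (∫⁻ w, ENNReal.ofReal (V w) ∂(P z - c • ν)) ≤ ENNReal.ofReal (lam*R+b) := by
        refine le_trans (lintegral_mono' (Measure.sub_le) le_rfl) ?_
        refine le_trans (hdrift z) (ENNReal.ofReal_le_ofReal ?_)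
        nlinarith
      rw [huniv]
      calc ENNReal.ofReal (1-δ) * ENNReal.ofReal (1-ηp)
            + ENNReal.ofReal δ * ∫⁻ w, ENNReal.ofReal (V w) ∂(P z - c • ν)
          ≤ ENNReal.ofReal (1-δ) * ENNReal.ofReal (1-ηp)
            + ENNReal.ofReal δ * ENNReal.ofReal (lam*R+b) :=
            add_le_add_right (mul_le_mul_right hVsub _) _
        _ = ENNReal.ofReal ((1-δ)*(1-ηp) + δ*(lam*R+b)) := by
            rw [← ENNReal.ofReal_mul (by linarith : (0:ℝ) ≤ 1-δ),
              ← ENNReal.ofReal_mul hδ0.le,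
              ← ENNReal.ofReal_add
                (mul_nonneg (by linarith) (by linarith))
                (mul_nonneg hδ0.le (by nlinarith [mul_nonneg hlam0.le hRpos.le]))]
    have hsplit : ∀ z : E, V z ≤ R →
        (∫ w, f w ∂P z) = (∫ w, f w ∂(P z - c • ν)) + ∫ w, f w ∂(c • ν) := by
      intro z hVz
      have hsum : (P z - c • ν) + c • ν = P z := Measure.sub_add_cancel_of_le (hle z hVz)
      conv_lhs => rw [← hsum]
      exact integral_add_measure ((hfint z).mono_measure (Measure.sub_le))
        ((hfint z).mono_measure (hle z hVz))
    have hxeq := hsplit x hVx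
    have hyeq := hsplit y hVy
    have hdiff : (∫ w, f w ∂P x) - ∫ w, f w ∂P y
        = (∫ w, f w ∂(P x - c • ν)) - ∫ w, f w ∂(P y - c • ν) := by
      rw [hxeq, hyeq]; ring
    rw [hdiff]
    calc |(∫ w, f w ∂(P x - c • ν)) - ∫ w, f w ∂(P y - c • ν)|
        ≤ |∫ w, f w ∂(P x - c • ν)| + |∫ w, f w ∂(P y - c • ν)| := abs_sub _ _
      _ ≤ ((1-δ)*(1-ηp) + δ*(lam*R+b)) + ((1-δ)*(1-ηp) + δ*(lam*R+b)) :=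
          add_le_add (hsub_bound x hVx) (hsub_bound y hVy)
      _ ≤ γ * 2 := by nlinarith
      _ ≤ γ * (W x + W y) := by
          refine mul_le_mul_of_nonneg_left ?_ hγ0
          have := hW1 x; have := hW1 y; linarith

/-- the (clamped) time grid -/
noncomputable def timeList (n : ℕ) (i₀ : ℤ) (c : ℕ) : List ℝ :=
  List.ofFn (fun t : Fin c => max (((i₀:ℝ) + 1 + (t:ℕ)) / (n:ℝ)) 0)

lemma max_div_eq {n a b : ℝ} (h : a = b) : max (a/n) 0 = max (b/n) 0 := by rw [h]

lemma timeList_append (n : ℕ) (i₀ : ℤ) (c d : ℕ) :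
    timeList n i₀ (c + d) = timeList n i₀ c ++ timeList n (i₀ + c) d := by
  unfold timeList
  rw [List.ofFn_add]
  congr 1 <;>
    (congr 1; funext i; apply max_div_eq;
     simp only [Fin.coe_castAdd, Fin.coe_natAdd]; push_cast; ring)

lemma timeList_cons (n : ℕ) (i₀ : ℤ) (c : ℕ) :
    timeList n i₀ (c + 1) = (max (((i₀:ℝ) + 1) / (n:ℝ)) 0) :: timeList n (i₀ + 1) c := by
  unfold timeList
  rw [List.ofFn_succ]
  congr 1
  · norm_num
  · congr 1; funext i
    apply max_div_eq
    simp only [Fin.val_succ]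
    push_cast
    ring

lemma timeList_mem_Icc {n : ℕ} (hn : 0 < n) {i₀ : ℤ} {c : ℕ} (h : i₀ + c ≤ (n:ℤ)) :
    ∀ u ∈ timeList n i₀ c, u ∈ Set.Icc (0:ℝ) 1 := by
  intro u hu
  unfold timeList at hu
  rw [List.mem_ofFn] at hu
  obtain ⟨t, rfl⟩ := hu
  refine ⟨le_max_right _ _, ?_⟩
  have hnR : (0:ℝ) < (n:ℝ) := by exact_mod_cast hn
  have ht : ((i₀:ℝ) + 1 + (t:ℕ)) ≤ (n:ℝ) := by
    have h1 : (i₀:ℤ) + 1 + (t:ℕ) ≤ (n:ℤ) := by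
      have := t.2
      omega
    exact_mod_cast h1
  have : ((i₀:ℝ) + 1 + (t:ℕ)) / (n:ℝ) ≤ 1 := by
    rw [div_le_one hnR]; exact ht
  exact max_le this zero_le_one

variable {Q : ℝ → E → Measure E}

lemma Qclamp (hQ0 : ∀ u ≤ (0:ℝ), Q u = Q 0) (u : ℝ) : Q (max u 0) = Q u := by
  rcases le_or_gt u 0 with h | h
  · rw [max_eq_right h, hQ0 u h]
  · rw [max_eq_left h.le]

lemma tvstep_eq_seqStep (hQ0 : ∀ u ≤ (0:ℝ), Q u = Q 0) (n : ℕ) :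
    ∀ (c : ℕ) (i₀ : ℤ) (x : E), tvstep Q n i₀ c x = seqStep Q (timeList n i₀ c) x := by
  intro c
  induction c with
  | zero => intro i₀ x; rfl
  | succ c ih =>
    intro i₀ x
    show (Q (((i₀:ℝ) + 1) / (n:ℝ)) x).bind (tvstep Q n (i₀+1) c) = _
    rw [timeList_cons]
    show _ = (Q (max (((i₀:ℝ) + 1) / (n:ℝ)) 0) x).bind (seqStep Q (timeList n (i₀+1) c))
    rw [Qclamp hQ0]
    congr 1
    funext y
    exact ih (i₀+1) y

lemma seqStep_singleton (hQmeas : ∀ u, Measurable (Q u)) (u : ℝ) (x : E) :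
    seqStep Q (u :: List.nil) x = Q u x := by
  show (Q u x).bind (seqStep Q ([] : List ℝ)) = Q u x
  have h1 : seqStep Q ([] : List ℝ) = Measure.dirac := by funext y; rfl
  rw [h1, Measure.bind_dirac]

lemma pi_rec (hQmeas : ∀ u, Measurable (Q u)) (hQ0 : ∀ u ≤ (0:ℝ), Q u = Q 0)
    (πn : ℕ → ℤ → Measure E) (n : ℕ)
    (hrec : ∀ (k : ℤ), k ≤ (n:ℤ) → πn n k = (πn n (k-1)).bind (Q ((k:ℝ)/(n:ℝ)))) :
    ∀ (c : ℕ) (k : ℤ), k ≤ (n:ℤ) →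
      πn n k = (πn n (k - c)).bind (seqStep Q (timeList n (k - c) c)) := by
  intro c
  induction c with
  | zero =>
    intro k hk
    have h0 : timeList n (k - (0:ℕ)) 0 = ([] : List ℝ) := rfl
    have h1 : seqStep Q ([] : List ℝ) = Measure.dirac := by funext y; rfl
    rw [h0, h1, Measure.bind_dirac]
    norm_num
  | succ c ih =>
    intro k hk
    have hk1 : k - 1 ≤ (n:ℤ) := by omega
    have e0 : k - 1 - c = k - (c+1:ℕ) := by push_cast; ring
    have e1 := hrec k hk
    rw [ih (k-1) hk1, e0] at e1
    have e2 : timeList n (k - (c+1:ℕ)) (c + 1)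
        = timeList n (k - (c+1:ℕ)) c ++ timeList n (k - (c+1:ℕ) + c) 1 :=
      timeList_append n _ c 1
    rw [e1, e2, bind_seqStep_append hQmeas]
    congr 1
    have e3 : timeList n (k - (c+1:ℕ) + c) 1 = (max ((k:ℝ)/(n:ℝ)) 0) :: List.nil := by
      unfold timeList
      simp only [List.ofFn_succ, List.ofFn_zero]
      congr 1
      apply max_div_eq
      simp only [Fin.val_zero]
      push_cast
      ring
    rw [e3]
    funext y
    rw [seqStep_singleton hQmeas, Qclamp hQ0]

lemma bind_seqStep_prob (hQmeas : ∀ u, Measurable (Q u))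
    (hQp : ∀ u x, IsProbabilityMeasure (Q u x)) (l : List ℝ) {μ : Measure E}
    (hμ : IsProbabilityMeasure μ) : IsProbabilityMeasure (μ.bind (seqStep Q l)) := by
  constructor
  rw [Measure.bind_apply MeasurableSet.univ (seqStep_measurable hQmeas l).aemeasurable]
  have : ∀ y, seqStep Q l y Set.univ = 1 := fun y => (seqStep_prob hQmeas hQp l y).measure_univ
  simp only [this]
  simpa using hμ.measure_univ

lemma lint_bind_seqStep_le {V : E → ℝ} (hVm : Measurable V) (hVnn : ∀ x, 0 ≤ V x)
    (hQmeas : ∀ u, Measurable (Q u)) {K : ℝ} (hK : 1 ≤ K)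
    (hdrift1 : ∀ u ∈ Set.Icc (0:ℝ) 1, ∀ x,
      (∫⁻ y, ENNReal.ofReal (V y) ∂(Q u x)) ≤ ENNReal.ofReal (K * V x)) :
    ∀ (l : List ℝ), (∀ u ∈ l, u ∈ Set.Icc (0:ℝ) 1) → ∀ μ : Measure E,
      (∫⁻ y, ENNReal.ofReal (V y) ∂(μ.bind (seqStep Q l)))
        ≤ ENNReal.ofReal K ^ l.length * ∫⁻ x, ENNReal.ofReal (V x) ∂μ := by
  intro l
  induction l with
  | nil =>
    intro _ μ
    have h1 : seqStep Q ([] : List ℝ) = Measure.dirac := by funext y; rfl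
    rw [h1, Measure.bind_dirac]
    simp
  | cons u l ih =>
    intro hl μ
    rw [bind_seqStep_cons hQmeas]
    calc (∫⁻ y, ENNReal.ofReal (V y) ∂((μ.bind (Q u)).bind (seqStep Q l)))
        ≤ ENNReal.ofReal K ^ l.length * ∫⁻ x, ENNReal.ofReal (V x) ∂(μ.bind (Q u)) :=
          ih (fun v hv => hl v (List.mem_cons_of_mem u hv)) _
      _ ≤ ENNReal.ofReal K ^ l.length
            * (ENNReal.ofReal K * ∫⁻ x, ENNReal.ofReal (V x) ∂μ) := by
          refine mul_le_mul_right ?_ _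
          exact lintegral_weight_bind_le (hQmeas u) hVm (by linarith)
            (hdrift1 u (hl u (List.mem_cons_self)) ) hVnn μ
      _ = ENNReal.ofReal K ^ (u :: l).length * ∫⁻ x, ENNReal.ofReal (V x) ∂μ := by
          rw [List.length_cons, pow_succ]
          ring

end AuxHM

set_option maxHeartbeats 1600000 in
theorem statement18
    {E : Type*} [MeasurableSpace E]
    (Q : ℝ → E → Measure E)
    (hQmeas : ∀ u, Measurable (Q u))
    (hQprob : ∀ u x, IsProbabilityMeasure (Q u x))
    (V : E → ℝ) (hVmeas : Measurable V) (hV1 : ∀ x, 1 ≤ V x)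
    -- Assumption F1
    (ε lam b K : ℝ) (m : ℕ)
    (hε : 0 < ε) (hlam : lam ∈ Set.Ioo (0:ℝ) 1) (hm : 1 ≤ m) (hb : 0 < b) (hK : 1 ≤ K)
    (hdrift1 : ∀ u ∈ Icc (0:ℝ) 1, ∀ x,
      (∫⁻ y, ENNReal.ofReal (V y) ∂(Q u x)) ≤ ENNReal.ofReal (K * V x))
    (hdriftm : ∀ u ∈ Icc (0:ℝ) 1, ∀ us : Fin m → ℝ,
      (∀ i, us i ∈ Icc (0:ℝ) 1 ∧ |u - us i| ≤ ε) → ∀ x,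
      (∫⁻ y, ENNReal.ofReal (V y) ∂(seqStep Q (List.ofFn us) x))
        ≤ ENNReal.ofReal (lam * V x + b))
    (η R : ℝ) (hη : 0 < η) (hR : 2 * b / (1 - lam) < R)
    (ν : Measure E) (hν : IsProbabilityMeasure ν)
    (hminor : ∀ u ∈ Icc (0:ℝ) 1, ∀ us : Fin m → ℝ,
      (∀ i, us i ∈ Icc (0:ℝ) 1 ∧ |u - us i| ≤ ε) → ∀ x, V x ≤ R →
      ∀ s : Set E, ENNReal.ofReal η * ν s ≤ seqStep Q (List.ofFn us) x s)
    -- convention Q_u = Q_0 for u < 0, and the triangular array of Markov chains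
    (hQ0 : ∀ u ≤ (0:ℝ), Q u = Q 0)
    (πn : ℕ → ℤ → Measure E)
    (hπnprob : ∀ n k, IsProbabilityMeasure (πn n k))
    (hstart : ∀ n : ℕ, ∀ k ≤ (0:ℤ), πn n k = πn n 0)
    (hrec : ∀ (n : ℕ) (k : ℤ), k ≤ (n:ℤ) →
      πn n k = (πn n (k-1)).bind (Q ((k:ℝ)/(n:ℝ)))) :
    ∃ δ ∈ Set.Ioo (0:ℝ) 1, ∃ γ ∈ Set.Ioo (0:ℝ) 1,
      -- δ, γ are the constants of the Hairer–Mattingly contraction lemma: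
      -- Δ_{V_δ}(Q_{u₁}⋯Q_{u_m}) ≤ γ whenever |u_i − u| ≤ ε, where V_δ = 1 − δ + δV
      (∀ u ∈ Icc (0:ℝ) 1, ∀ us : Fin m → ℝ,
        (∀ i, us i ∈ Icc (0:ℝ) 1 ∧ |u - us i| ≤ ε) →
        ∀ μ₁ μ₂ : Measure E, IsProbabilityMeasure μ₁ → IsProbabilityMeasure μ₂ →
          (∫⁻ x, ENNReal.ofReal (1 - δ + δ * V x) ∂μ₁) < ∞ →
          (∫⁻ x, ENNReal.ofReal (1 - δ + δ * V x) ∂μ₂) < ∞ →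
          vDist (fun x => 1 - δ + δ * V x)
              (μ₁.bind (seqStep Q (List.ofFn us))) (μ₂.bind (seqStep Q (List.ofFn us)))
            ≤ γ * vDist (fun x => 1 - δ + δ * V x) μ₁ μ₂) ∧
      -- the bound on β^{(V)}_n(j) for n ≥ m/ε and j = mg + s
      (∀ n : ℕ, (m:ℝ)/ε ≤ (n:ℝ) →
        ∀ M : ℝ, (∀ k : ℤ, k ≤ (n:ℤ) →
            (∫⁻ x, ENNReal.ofReal (V x) ∂(πn n k)) ≤ ENNReal.ofReal M) →
        ∀ (j g s : ℕ), j = m * g + s → s < m →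
          betaV V Q πn n j ≤ 2 * δ⁻¹ * M * K ^ s * γ ^ g) := by
  classical
  obtain ⟨hlam0, hlam1⟩ := hlam
  have h1lam : (0:ℝ) < 1 - lam := by linarith
  have hRb2 : 2*b < R*(1-lam) := by
    have := (div_lt_iff₀ h1lam).1 hR
    linarith [this]
  have hRpos : (0:ℝ) < R := by nlinarith
  have hlRb : (0:ℝ) < lam*R + b := by nlinarith [mul_pos hlam0 hRpos]
  set η' : ℝ := min η 1 with hη'def
  have hη'0 : 0 < η' := lt_min hη one_pos
  have hη'1 : η' ≤ 1 := min_le_right _ _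
  have hη'η : η' ≤ η := min_le_left _ _
  set β : ℝ := η' / (2*(lam*R+b)) with hβdef
  have hβ0 : 0 < β := div_pos hη'0 (by linarith)
  have h1β : (0:ℝ) < 1+β := by linarith
  set δ : ℝ := β/(1+β) with hδdef
  have hδ0 : 0 < δ := div_pos hβ0 h1β
  have hδ1 : δ < 1 := by rw [hδdef, div_lt_one h1β]; linarith
  have hβRb : β*(lam*R+b) = η'/2 := by
    rw [hβdef]; field_simp
    all_goals ring
  set γA : ℝ := (2+β*(lam*R+2*b))/(2+β*R) with hγAdef
  have h2βR : (0:ℝ) < 2+β*R := by nlinarith [mul_pos hβ0 hRpos]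
  have hnum : (0:ℝ) < 2+β*(lam*R+2*b) := by nlinarith [mul_pos hβ0 hlRb, mul_pos hβ0 hb]
  have hγA0 : 0 < γA := div_pos hnum h2βR
  have hγA1 : γA < 1 := by
    rw [hγAdef, div_lt_one h2βR]
    nlinarith [mul_lt_mul_of_pos_left (show lam*R+2*b < R by nlinarith) hβ0]
  have hγAkey : γA*(2+β*R) = 2+β*(lam*R+2*b) := by
    rw [hγAdef]; field_simp
  have hγAlam : lam ≤ γA := by
    rw [hγAdef, le_div_iff₀ h2βR]
    nlinarith [mul_pos hβ0 hb, mul_nonneg hβ0.le hRpos.le]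
  set γ : ℝ := max γA (1 - η'/2) with hγdef
  have hγ0 : 0 < γ := lt_of_lt_of_le hγA0 (le_max_left _ _)
  have hγ1 : γ < 1 := max_lt hγA1 (by linarith)
  have hγγA : γA ≤ γ := le_max_left _ _
  have hγB' : 1-η'/2 ≤ γ := le_max_right _ _
  have hγlam : lam ≤ γ := le_trans hγAlam hγγA
  -- the two key scalar inequalities
  have hA : ∀ S : ℝ, R ≤ S → 2*(1-δ) + δ*(lam*S+2*b) ≤ γ*(2*(1-δ)+δ*S) := by
    intro S hS
    have hcore : 2+β*(lam*S+2*b) ≤ γ*(2+β*S) := by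
      have h6 : 2+β*(lam*R+2*b) ≤ γ*(2+β*R) := by
        rw [← hγAkey]
        exact mul_le_mul_of_nonneg_right hγγA h2βR.le
      have h7 : lam*(β*(S-R)) ≤ γ*(β*(S-R)) :=
        mul_le_mul_of_nonneg_right hγlam (mul_nonneg hβ0.le (by linarith))
      nlinarith [h6, h7]
    have e1 : 2*(1-δ) + δ*(lam*S+2*b) = (2 + β*(lam*S+2*b))/(1+β) := by
      rw [hδdef]; field_simp
      all_goals ring
    have e2 : γ*(2*(1-δ)+δ*S) = (γ*(2+β*S))/(1+β) := by
      rw [hδdef]; field_simp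
      all_goals ring
    rw [e1, e2]
    gcongr
  have hB : (1-δ)*(1-η') + δ*(lam*R+b) ≤ γ := by
    have e : (1-δ)*(1-η') + δ*(lam*R+b) = ((1-η') + β*(lam*R+b))/(1+β) := by
      rw [hδdef]; field_simp
      all_goals ring
    rw [e, hβRb]
    have e2 : (1-η') + η'/2 = 1 - η'/2 := by ring
    rw [e2]
    calc (1-η'/2)/(1+β) ≤ 1-η'/2 := div_le_self (by linarith) (by linarith)
      _ ≤ γ := hγB'
  -- weight basics
  have hVnn : ∀ x, 0 ≤ V x := fun x => le_trans zero_le_one (hV1 x)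
  set W : E → ℝ := fun x => 1 - δ + δ * V x with hWdef
  have hWm : Measurable W := measurable_const.add (hVmeas.const_mul δ)
  have hW1 : ∀ x, 1 ≤ W x := fun x => by
    simp only [hWdef]; nlinarith [mul_le_mul_of_nonneg_left (hV1 x) hδ0.le]
  have hWnn : ∀ x, 0 ≤ W x := fun x => le_trans zero_le_one (hW1 x)
  have hWleV : ∀ x, W x ≤ V x := fun x => by
    simp only [hWdef]
    nlinarith [mul_le_mul_of_nonneg_left (hV1 x) (by linarith : (0:ℝ) ≤ 1-δ)]
  have hVleW : ∀ x, V x ≤ δ⁻¹ * W x := fun x => by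
    simp only [hWdef]
    rw [le_inv_mul_iff₀ hδ0]
    nlinarith
  have hlWleV : ∀ ρ : Measure E, (∫⁻ x, ENNReal.ofReal (W x) ∂ρ) ≤ ∫⁻ x, ENNReal.ofReal (V x) ∂ρ :=
    fun ρ => lintegral_mono fun x => ENNReal.ofReal_le_ofReal (hWleV x)
  have hlVleW : ∀ ρ : Measure E, (∫⁻ x, ENNReal.ofReal (V x) ∂ρ)
      ≤ ENNReal.ofReal δ⁻¹ * ∫⁻ x, ENNReal.ofReal (W x) ∂ρ := by
    intro ρ
    rw [← lintegral_const_mul _ hWm.ennreal_ofReal]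
    refine lintegral_mono fun x => ?_
    rw [← ENNReal.ofReal_mul (inv_nonneg.2 hδ0.le)]
    exact ENNReal.ofReal_le_ofReal (hVleW x)
  have hVfin_of : ∀ ρ : Measure E, (∫⁻ x, ENNReal.ofReal (W x) ∂ρ) ≠ ∞ →
      (∫⁻ x, ENNReal.ofReal (V x) ∂ρ) ≠ ∞ := fun ρ h =>
    ne_top_of_le_ne_top (ENNReal.mul_ne_top ENNReal.ofReal_ne_top h) (hlVleW ρ)
  have hWfin_of : ∀ ρ : Measure E, (∫⁻ x, ENNReal.ofReal (V x) ∂ρ) ≠ ∞ →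
      (∫⁻ x, ENNReal.ofReal (W x) ∂ρ) ≠ ∞ := fun ρ h =>
    ne_top_of_le_ne_top h (hlWleV ρ)
  -- W-drift computation from a V-drift bound
  have hWdrift_of : ∀ (ρ : Measure E), IsProbabilityMeasure ρ → ∀ B : ℝ, 0 ≤ B →
      ((∫⁻ x, ENNReal.ofReal (V x) ∂ρ) ≤ ENNReal.ofReal B) →
      (∫⁻ x, ENNReal.ofReal (W x) ∂ρ) ≤ ENNReal.ofReal ((1-δ) + δ*B) := by
    intro ρ hρ B hB hVB
    have e0 : (∫⁻ x, ENNReal.ofReal (W x) ∂ρ)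
        = ∫⁻ x, ENNReal.ofReal (1 - δ + δ * V x) ∂ρ := rfl
    rw [e0, lint_W hVmeas hδ0.le hδ1.le hVnn, hρ.measure_univ, mul_one]
    calc ENNReal.ofReal (1-δ) + ENNReal.ofReal δ * ∫⁻ x, ENNReal.ofReal (V x) ∂ρ
        ≤ ENNReal.ofReal (1-δ) + ENNReal.ofReal δ * ENNReal.ofReal B :=
          add_le_add_right (mul_le_mul_right hVB _) _
      _ = ENNReal.ofReal ((1-δ) + δ*B) := by
          rw [← ENNReal.ofReal_mul hδ0.le,
            ← ENNReal.ofReal_add (by linarith) (mul_nonneg hδ0.le hB)]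
  -- the core contraction estimate (used for both conclusions)
  have hcore : ∀ u ∈ Icc (0:ℝ) 1, ∀ us : Fin m → ℝ,
      (∀ i, us i ∈ Icc (0:ℝ) 1 ∧ |u - us i| ≤ ε) →
      ∀ μ₁ μ₂ : Measure E, IsProbabilityMeasure μ₁ → IsProbabilityMeasure μ₂ →
      (∫⁻ x, ENNReal.ofReal (W x) ∂μ₁) ≠ ∞ → (∫⁻ x, ENNReal.ofReal (W x) ∂μ₂) ≠ ∞ →
      vDist W (μ₁.bind (seqStep Q (List.ofFn us))) (μ₂.bind (seqStep Q (List.ofFn us)))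
        ≤ γ * vDist W μ₁ μ₂ := by
    intro u hu us hus μ₁ μ₂ p₁ p₂ f₁ f₂
    have hPm : Measurable (seqStep Q (List.ofFn us)) := seqStep_measurable hQmeas _
    have hPp : ∀ x, IsProbabilityMeasure (seqStep Q (List.ofFn us) x) :=
      fun x => seqStep_prob hQmeas hQprob _ x
    have hPdrift : ∀ x, (∫⁻ y, ENNReal.ofReal (V y) ∂(seqStep Q (List.ofFn us) x))
        ≤ ENNReal.ofReal (lam * V x + b) := hdriftm u hu us hus
    have hPminor : ∀ x, V x ≤ R → ∀ s : Set E,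
        ENNReal.ofReal η' * ν s ≤ seqStep Q (List.ofFn us) x s := fun x hx s =>
      le_trans (mul_le_mul_left (ENNReal.ofReal_le_ofReal hη'η) _)
        (hminor u hu us hus x hx s)
    have hWdrift : ∀ x, (∫⁻ y, ENNReal.ofReal (W y) ∂(seqStep Q (List.ofFn us) x))
        ≤ ENNReal.ofReal ((1+b) * W x) := by
      intro x
      refine le_trans (hWdrift_of _ (hPp x) (lam * V x + b)
        (by nlinarith [mul_nonneg hlam0.le (hVnn x)]) (hPdrift x)) ?_
      refine ENNReal.ofReal_le_ofReal ?_
      simp only [hWdef]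
      have h1 : 0 ≤ δ*(1-lam)*V x :=
        mul_nonneg (mul_nonneg hδ0.le (by linarith)) (hVnn x)
      have h2 : δ*1 ≤ δ*V x := mul_le_mul_of_nonneg_left (hV1 x) hδ0.le
      have h4 : 0 ≤ b*(δ*V x - δ) := mul_nonneg hb.le (by linarith)
      nlinarith [h1, h4]
    refine vDist_bind_contract hPm hPp hWm hWnn hγ0.le (by linarith : (1:ℝ) ≤ 1+b)
      hWdrift ?_ μ₁ μ₂ p₁ p₂ f₁ f₂
    intro f hfm hfW x y
    exact osc_bound hVmeas hV1 hlam0 hlam1 hb hη'0 hη'1 hRpos hν hPp hPdrift hPminor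
      hδ0 hδ1 hγ0.le hA hB f hfm hfW x y
  refine ⟨δ, ⟨hδ0, hδ1⟩, γ, ⟨hγ0, hγ1⟩, ?_, ?_⟩
  · intro u hu us hus μ₁ μ₂ p₁ p₂ f₁ f₂
    exact hcore u hu us hus μ₁ μ₂ p₁ p₂ (lt_top_iff_ne_top.1 f₁) (lt_top_iff_ne_top.1 f₂)
  · -- the betaV bound
    intro n hn M hM j g s hj hs
    have hmN : 0 < m := hm
    have hmpos : (0:ℝ) < m := by exact_mod_cast hmN
    have hnR : (0:ℝ) < (n:ℝ) := lt_of_lt_of_le (div_pos hmpos hε) hn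
    have hn0 : 0 < n := by exact_mod_cast hnR
    have hmn : (m:ℝ)/(n:ℝ) ≤ ε := by
      rw [div_le_iff₀ hnR]
      have h1 := (div_le_iff₀ hε).1 hn
      linarith
    have hK0 : (0:ℝ) < K := lt_of_lt_of_le one_pos hK
    have hM1 : (1:ℝ) ≤ M := by
      have h0 : (0:ℤ) ≤ (n:ℤ) := Int.natCast_nonneg n
      have h1 : (1:ℝ≥0∞) ≤ ∫⁻ x, ENNReal.ofReal (V x) ∂(πn n 0) := by
        calc (1:ℝ≥0∞) = ∫⁻ _, 1 ∂(πn n 0) := by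
              rw [lintegral_one, (hπnprob n 0).measure_univ]
          _ ≤ _ := lintegral_mono fun x => by
              simpa using ENNReal.one_le_ofReal.2 (hV1 x)
      exact ENNReal.one_le_ofReal.1 (le_trans h1 (hM 0 h0))
    have hbindQ : ∀ (u : ℝ) (μ : Measure E), IsProbabilityMeasure μ →
        IsProbabilityMeasure (μ.bind (Q u)) := by
      intro u μ hμ
      constructor
      rw [Measure.bind_apply MeasurableSet.univ (hQmeas u).aemeasurable]
      have h1 : ∀ y, Q u y Set.univ = 1 := fun y => (hQprob u y).measure_univ
      simp only [h1]
      simpa using hμ.measure_univ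
    have hfinbind : ∀ (l : List ℝ), (∀ u ∈ l, u ∈ Icc (0:ℝ) 1) → ∀ μ : Measure E,
        (∫⁻ x, ENNReal.ofReal (V x) ∂μ) ≠ ∞ →
        (∫⁻ x, ENNReal.ofReal (V x) ∂(μ.bind (seqStep Q l))) ≠ ∞ := by
      intro l hl μ hfin
      refine ne_top_of_le_ne_top ?_ (lint_bind_seqStep_le hVmeas hVnn hQmeas hK hdrift1 l hl μ)
      exact ENNReal.mul_ne_top (ENNReal.pow_ne_top ENNReal.ofReal_ne_top) hfin
    have hQdriftW : ∀ u ∈ Icc (0:ℝ) 1, ∀ x,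
        (∫⁻ y, ENNReal.ofReal (W y) ∂(Q u x)) ≤ ENNReal.ofReal (K * W x) := by
      intro u hu x
      refine le_trans (hWdrift_of _ (hQprob u x) (K * V x)
        (mul_nonneg hK0.le (hVnn x)) (hdrift1 u hu x)) ?_
      refine ENNReal.ofReal_le_ofReal ?_
      simp only [hWdef]
      nlinarith [mul_nonneg (sub_nonneg.2 hK) (by linarith : (0:ℝ) ≤ 1-δ),
        mul_le_mul_of_nonneg_left (hV1 x) (mul_nonneg (sub_nonneg.2 hK) hδ0.le)]
    -- contraction over s single steps
    have hsingles : ∀ (s' : ℕ) (i₀ : ℤ), i₀ + (s' : ℤ) ≤ (n:ℤ) →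
        ∀ μ₁ μ₂ : Measure E, IsProbabilityMeasure μ₁ → IsProbabilityMeasure μ₂ →
        (∫⁻ x, ENNReal.ofReal (V x) ∂μ₁) ≠ ∞ → (∫⁻ x, ENNReal.ofReal (V x) ∂μ₂) ≠ ∞ →
        vDist W (μ₁.bind (seqStep Q (timeList n i₀ s')))
            (μ₂.bind (seqStep Q (timeList n i₀ s')))
          ≤ K ^ s' * vDist W μ₁ μ₂ := by
      intro s'
      induction s' with
      | zero =>
        intro i₀ _ μ₁ μ₂ _ _ _ _
        have h0 : timeList n i₀ 0 = ([] : List ℝ) := rfl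
        have h1 : seqStep Q ([] : List ℝ) = Measure.dirac := by funext y; rfl
        rw [h0, h1, Measure.bind_dirac, Measure.bind_dirac, pow_zero, one_mul]
      | succ s' ih =>
        intro i₀ hle μ₁ μ₂ p₁ p₂ f₁ f₂
        rw [timeList_cons, bind_seqStep_cons hQmeas, bind_seqStep_cons hQmeas]
        have hu' : max (((i₀:ℝ)+1)/(n:ℝ)) 0 ∈ Icc (0:ℝ) 1 := by
          constructor
          · exact le_max_right _ _
          · refine max_le ?_ zero_le_one
            rw [div_le_one hnR]
            exact_mod_cast (by omega : i₀ + 1 ≤ (n:ℤ))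
        have hq1 := hbindQ (max (((i₀:ℝ)+1)/(n:ℝ)) 0) μ₁ p₁
        have hq2 := hbindQ (max (((i₀:ℝ)+1)/(n:ℝ)) 0) μ₂ p₂
        have hf1 : (∫⁻ x, ENNReal.ofReal (V x) ∂(μ₁.bind (Q (max (((i₀:ℝ)+1)/(n:ℝ)) 0)))) ≠ ∞ :=
          ne_top_of_le_ne_top (ENNReal.mul_ne_top ENNReal.ofReal_ne_top f₁)
            (lintegral_weight_bind_le (hQmeas _) hVmeas hK0.le (hdrift1 _ hu') hVnn μ₁)
        have hf2 : (∫⁻ x, ENNReal.ofReal (V x) ∂(μ₂.bind (Q (max (((i₀:ℝ)+1)/(n:ℝ)) 0)))) ≠ ∞ :=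
          ne_top_of_le_ne_top (ENNReal.mul_ne_top ENNReal.ofReal_ne_top f₂)
            (lintegral_weight_bind_le (hQmeas _) hVmeas hK0.le (hdrift1 _ hu') hVnn μ₂)
        calc vDist W ((μ₁.bind (Q (max (((i₀:ℝ)+1)/(n:ℝ)) 0))).bind
                (seqStep Q (timeList n (i₀+1) s')))
              ((μ₂.bind (Q (max (((i₀:ℝ)+1)/(n:ℝ)) 0))).bind
                (seqStep Q (timeList n (i₀+1) s')))
            ≤ K ^ s' * vDist W (μ₁.bind (Q (max (((i₀:ℝ)+1)/(n:ℝ)) 0)))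
                (μ₂.bind (Q (max (((i₀:ℝ)+1)/(n:ℝ)) 0))) :=
              ih (i₀+1) (by omega) _ _ hq1 hq2 hf1 hf2
          _ ≤ K ^ s' * (K * vDist W μ₁ μ₂) := by
              refine mul_le_mul_of_nonneg_left ?_ (pow_nonneg hK0.le s')
              exact vDist_bind_le (hQmeas _) (hQprob _) hWm hWnn hK0
                (hQdriftW _ hu') μ₁ μ₂ (hWfin_of μ₁ f₁) (hWfin_of μ₂ f₂)
          _ = K ^ (s'+1) * vDist W μ₁ μ₂ := by ring
    -- contraction over g blocks of m steps
    have hblocks : ∀ (g' : ℕ) (i₀ : ℤ), i₀ + ((m*g' : ℕ) : ℤ) ≤ (n:ℤ) →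
        ∀ μ₁ μ₂ : Measure E, IsProbabilityMeasure μ₁ → IsProbabilityMeasure μ₂ →
        (∫⁻ x, ENNReal.ofReal (V x) ∂μ₁) ≠ ∞ → (∫⁻ x, ENNReal.ofReal (V x) ∂μ₂) ≠ ∞ →
        vDist W (μ₁.bind (seqStep Q (timeList n i₀ (m*g'))))
            (μ₂.bind (seqStep Q (timeList n i₀ (m*g'))))
          ≤ γ ^ g' * vDist W μ₁ μ₂ := by
      intro g'
      induction g' with
      | zero =>
        intro i₀ _ μ₁ μ₂ _ _ _ _
        have h0 : timeList n i₀ (m*0) = ([] : List ℝ) := by rw [Nat.mul_zero]; rfl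
        have h1 : seqStep Q ([] : List ℝ) = Measure.dirac := by funext y; rfl
        rw [h0, h1, Measure.bind_dirac, Measure.bind_dirac, pow_zero, one_mul]
      | succ g' ih =>
        intro i₀ hle μ₁ μ₂ p₁ p₂ f₁ f₂
        have hmg : m*(g'+1) = m + m*g' := by ring
        have heq : ((m*(g'+1):ℕ):ℤ) = (m:ℤ) + ((m*g':ℕ):ℤ) := by push_cast; ring
        have hle1 : i₀ + (m:ℤ) ≤ (n:ℤ) := by
          have h2 := Int.natCast_nonneg (m*g')
          linarith [hle, heq]
        have hle2 : (i₀ + (m:ℤ)) + ((m*g':ℕ):ℤ) ≤ (n:ℤ) := by linarith [hle, heq]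
        rw [hmg, timeList_append, bind_seqStep_append hQmeas, bind_seqStep_append hQmeas]
        set us : Fin m → ℝ := fun t => max (((i₀:ℝ) + 1 + ((t:ℕ):ℝ)) / (n:ℝ)) 0 with husdef
        have hTL : timeList n i₀ m = List.ofFn us := rfl
        have husIcc : ∀ i : Fin m, us i ∈ Icc (0:ℝ) 1 := by
          intro i
          refine timeList_mem_Icc hn0 hle1 (us i) ?_
          rw [hTL]
          exact List.mem_ofFn.2 ⟨i, rfl⟩
        have hcenter : ∀ i : Fin m, |us ⟨0, hmN⟩ - us i| ≤ ε := by
          intro i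
          refine le_trans (abs_max_sub_max_le_abs _ _ _) ?_
          have e : ((i₀:ℝ)+1+(((0:ℕ)):ℝ))/(n:ℝ) - ((i₀:ℝ)+1+((i:ℕ):ℝ))/(n:ℝ)
              = -(((i:ℕ):ℝ)/(n:ℝ)) := by
            field_simp
            push_cast; ring
          calc |((i₀:ℝ)+1+(((0:ℕ)):ℝ))/(n:ℝ) - ((i₀:ℝ)+1+((i:ℕ):ℝ))/(n:ℝ)|
              = ((i:ℕ):ℝ)/(n:ℝ) := by
                rw [e, abs_neg, abs_of_nonneg (by positivity)]
            _ ≤ (m:ℝ)/(n:ℝ) := by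
                gcongr
                exact_mod_cast i.2.le
            _ ≤ ε := hmn
        have hfinA₁ : (∫⁻ x, ENNReal.ofReal (V x) ∂(μ₁.bind (seqStep Q (timeList n i₀ m)))) ≠ ∞ :=
          hfinbind _ (timeList_mem_Icc hn0 hle1) μ₁ f₁
        have hfinA₂ : (∫⁻ x, ENNReal.ofReal (V x) ∂(μ₂.bind (seqStep Q (timeList n i₀ m)))) ≠ ∞ :=
          hfinbind _ (timeList_mem_Icc hn0 hle1) μ₂ f₂
        calc vDist W ((μ₁.bind (seqStep Q (timeList n i₀ m))).bind
                (seqStep Q (timeList n (i₀ + (m:ℤ)) (m*g'))))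
              ((μ₂.bind (seqStep Q (timeList n i₀ m))).bind
                (seqStep Q (timeList n (i₀ + (m:ℤ)) (m*g'))))
            ≤ γ ^ g' * vDist W (μ₁.bind (seqStep Q (timeList n i₀ m)))
                (μ₂.bind (seqStep Q (timeList n i₀ m))) :=
              ih (i₀ + (m:ℤ)) hle2 _ _ (bind_seqStep_prob hQmeas hQprob _ p₁)
                (bind_seqStep_prob hQmeas hQprob _ p₂) hfinA₁ hfinA₂
          _ ≤ γ ^ g' * (γ * vDist W μ₁ μ₂) := by
              refine mul_le_mul_of_nonneg_left ?_ (pow_nonneg hγ0.le g')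
              rw [hTL]
              exact hcore (us ⟨0, hmN⟩) (husIcc _) us (fun i => ⟨husIcc i, hcenter i⟩)
                μ₁ μ₂ p₁ p₂ (hWfin_of μ₁ f₁) (hWfin_of μ₂ f₂)
          _ = γ ^ (g'+1) * vDist W μ₁ μ₂ := by ring
    -- bound for each k
    have hterm : ∀ k : ℤ, k ≤ (n:ℤ) →
        (∫ x, vDist V (tvstep Q n (k - j) j x) (πn n k) ∂(πn n (k - j)))
          ≤ 2 * δ⁻¹ * M * K ^ s * γ ^ g := by
      intro k hk
      have hjZ : (j:ℤ) = ((m*g:ℕ):ℤ) + (s:ℤ) := by rw [hj]; push_cast; ring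
      have hmgnn := Int.natCast_nonneg (m*g)
      have hsnn := Int.natCast_nonneg s
      have hkj : k - (j:ℤ) ≤ (n:ℤ) := by linarith [Int.natCast_nonneg j]
      have hμprob := hπnprob n (k - j)
      have hμfinV : (∫⁻ x, ENNReal.ofReal (V x) ∂(πn n (k-(j:ℤ)))) ≤ ENNReal.ofReal M :=
        hM (k-j) hkj
      have hμfinV' : (∫⁻ x, ENNReal.ofReal (V x) ∂(πn n (k-(j:ℤ)))) ≠ ∞ :=
        ne_top_of_le_ne_top ENNReal.ofReal_ne_top hμfinV
      have hπk : πn n k = (πn n (k - (j:ℤ))).bind (seqStep Q (timeList n (k - (j:ℤ)) j)) :=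
        pi_rec hQmeas hQ0 πn n (fun k' hk' => hrec n k' hk') j k hk
      have hLL : timeList n (k-(j:ℤ)) j
          = timeList n (k-(j:ℤ)) (m*g) ++ timeList n (k-(j:ℤ) + ((m*g:ℕ):ℤ)) s := by
        have h1 := timeList_append n (k-(j:ℤ)) (m*g) s
        rw [← hj] at h1
        exact h1
      have hIccA : ∀ u ∈ timeList n (k-(j:ℤ)) (m*g), u ∈ Icc (0:ℝ) 1 :=
        timeList_mem_Icc hn0 (by linarith)
      have hIccB : ∀ u ∈ timeList n (k-(j:ℤ)+((m*g:ℕ):ℤ)) s, u ∈ Icc (0:ℝ) 1 :=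
        timeList_mem_Icc hn0 (by linarith)
      have hpoint : ∀ x : E, vDist V (tvstep Q n (k - j) j x) (πn n k)
          ≤ (δ⁻¹ * K ^ s * γ ^ g) * (V x + M) := by
        intro x
        rw [tvstep_eq_seqStep hQ0, hπk]
        rw [show seqStep Q (timeList n (k-(j:ℤ)) j) x
            = (Measure.dirac x).bind (seqStep Q (timeList n (k-(j:ℤ)) j)) from
          (Measure.dirac_bind (seqStep_measurable hQmeas _) x).symm]
        rw [hLL, bind_seqStep_append hQmeas, bind_seqStep_append hQmeas]
        have hdV : (∫⁻ y, ENNReal.ofReal (V y) ∂(Measure.dirac x)) = ENNReal.ofReal (V x) :=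
          lintegral_dirac' x hVmeas.ennreal_ofReal
        have hdfin : (∫⁻ y, ENNReal.ofReal (V y) ∂(Measure.dirac x)) ≠ ∞ := by
          rw [hdV]; exact ENNReal.ofReal_ne_top
        have hprob₁ : IsProbabilityMeasure
            ((Measure.dirac x).bind (seqStep Q (timeList n (k-(j:ℤ)) (m*g)))) :=
          bind_seqStep_prob hQmeas hQprob _ (by infer_instance)
        have hprob₂ : IsProbabilityMeasure
            ((πn n (k-(j:ℤ))).bind (seqStep Q (timeList n (k-(j:ℤ)) (m*g)))) :=
          bind_seqStep_prob hQmeas hQprob _ hμprob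
        have hfinA₁ := hfinbind _ hIccA (Measure.dirac x) hdfin
        have hfinA₂ := hfinbind _ hIccA (πn n (k-(j:ℤ))) hμfinV'
        have hfinAB₁ := hfinbind _ hIccB _ hfinA₁
        have hfinAB₂ := hfinbind _ hIccB _ hfinA₂
        have hnn1 : (0:ℝ) ≤ δ⁻¹ := inv_nonneg.2 hδ0.le
        have hnn2 : (0:ℝ) ≤ K ^ s := pow_nonneg hK0.le s
        have hnn3 : (0:ℝ) ≤ γ ^ g := pow_nonneg hγ0.le g
        calc vDist V (((Measure.dirac x).bind (seqStep Q (timeList n (k-(j:ℤ)) (m*g)))).bind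
                (seqStep Q (timeList n (k-(j:ℤ)+((m*g:ℕ):ℤ)) s)))
              (((πn n (k-(j:ℤ))).bind (seqStep Q (timeList n (k-(j:ℤ)) (m*g)))).bind
                (seqStep Q (timeList n (k-(j:ℤ)+((m*g:ℕ):ℤ)) s)))
            ≤ δ⁻¹ * vDist W (((Measure.dirac x).bind (seqStep Q (timeList n (k-(j:ℤ)) (m*g)))).bind
                (seqStep Q (timeList n (k-(j:ℤ)+((m*g:ℕ):ℤ)) s)))
              (((πn n (k-(j:ℤ))).bind (seqStep Q (timeList n (k-(j:ℤ)) (m*g)))).bind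
                (seqStep Q (timeList n (k-(j:ℤ)+((m*g:ℕ):ℤ)) s))) :=
              vDist_le_mul_vDist hWm hVnn hWnn (inv_pos.2 hδ0) hVleW
                (hWfin_of _ hfinAB₁) (hWfin_of _ hfinAB₂)
          _ ≤ δ⁻¹ * (K^s * vDist W
                ((Measure.dirac x).bind (seqStep Q (timeList n (k-(j:ℤ)) (m*g))))
                ((πn n (k-(j:ℤ))).bind (seqStep Q (timeList n (k-(j:ℤ)) (m*g))))) := by
              refine mul_le_mul_of_nonneg_left ?_ hnn1
              exact hsingles s (k-(j:ℤ)+((m*g:ℕ):ℤ)) (by linarith) _ _ hprob₁ hprob₂ hfinA₁ hfinA₂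
          _ ≤ δ⁻¹ * (K^s * (γ^g * vDist W (Measure.dirac x) (πn n (k-(j:ℤ))))) := by
              refine mul_le_mul_of_nonneg_left (mul_le_mul_of_nonneg_left ?_ hnn2) hnn1
              exact hblocks g (k-(j:ℤ)) (by linarith) _ _ (by infer_instance) hμprob hdfin hμfinV'
          _ ≤ δ⁻¹ * (K^s * (γ^g * vDist V (Measure.dirac x) (πn n (k-(j:ℤ))))) := by
              refine mul_le_mul_of_nonneg_left (mul_le_mul_of_nonneg_left
                (mul_le_mul_of_nonneg_left ?_ hnn3) hnn2) hnn1
              have h1 := vDist_le_mul_vDist hVmeas hWnn hVnn one_pos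
                (fun z => by rw [one_mul]; exact hWleV z)
                (μ := Measure.dirac x) (ν := πn n (k-(j:ℤ))) hdfin hμfinV'
              simpa using h1
          _ ≤ δ⁻¹ * (K^s * (γ^g * (V x + M))) := by
              refine mul_le_mul_of_nonneg_left (mul_le_mul_of_nonneg_left
                (mul_le_mul_of_nonneg_left ?_ hnn3) hnn2) hnn1
              exact vDist_le_bound hVmeas hVnn (hVnn x) (by linarith : (0:ℝ) ≤ M)
                (le_of_eq hdV) hμfinV
          _ = (δ⁻¹ * K^s * γ^g) * (V x + M) := by ring
      have hVint : Integrable V (πn n (k-(j:ℤ))) :=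
        integrable_of_le_weight hVmeas hVmeas.aestronglyMeasurable
          (fun x => (abs_of_nonneg (hVnn x)).le) hμfinV'
      have hc₀ : (0:ℝ) ≤ δ⁻¹ * K^s * γ^g :=
        mul_nonneg (mul_nonneg (inv_nonneg.2 hδ0.le) (pow_nonneg hK0.le s)) (pow_nonneg hγ0.le g)
      have hGint : Integrable (fun x => (δ⁻¹ * K^s * γ^g) * (V x + M)) (πn n (k-(j:ℤ))) :=
        (hVint.add (integrable_const M)).const_mul _
      have hiV : (∫ x, V x ∂(πn n (k-(j:ℤ)))) ≤ M := by
        have h1 := abs_integral_le_weight hVmeas hVmeas (fun x => (abs_of_nonneg (hVnn x)).le)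
          (by linarith : (0:ℝ) ≤ M) hμfinV
        exact le_trans (le_abs_self _) h1
      calc (∫ x, vDist V (tvstep Q n (k - j) j x) (πn n k) ∂(πn n (k-(j:ℤ))))
          ≤ ∫ x, (δ⁻¹ * K^s * γ^g) * (V x + M) ∂(πn n (k-(j:ℤ))) :=
            integral_mono_of_nonneg (Eventually.of_forall fun x => vDist_nonneg _ _ _)
              hGint (Eventually.of_forall hpoint)
        _ = (δ⁻¹ * K^s * γ^g) * ((∫ x, V x ∂(πn n (k-(j:ℤ)))) + M) := by
            rw [integral_const_mul, integral_add hVint (integrable_const M), integral_const,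
              measureReal_def, hμprob.measure_univ]
            simp
        _ ≤ (δ⁻¹ * K^s * γ^g) * (M + M) :=
            mul_le_mul_of_nonneg_left (add_le_add_left hiV M) hc₀
        _ = 2 * δ⁻¹ * M * K ^ s * γ ^ g := by ring
    haveI : Nonempty {k : ℤ // k ≤ (n:ℤ)} := ⟨⟨0, Int.natCast_nonneg n⟩⟩
    exact ciSup_le fun k => hterm k.1 k.2


end
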